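/- Universal property of the weak conjugacy relation: let G be a topological group and let R ⊆ G × G be the intersection of the graphs of all equivalence relations ∼ on G that contain the conjugacy relation (x ∼ h x h⁻¹ for all x, h ∈ G) and whose quotient space G/∼ is Hausdorff. Then: (i) R is itself the graph of an equivalence relation on G that contains the conjugacy relation and whose quotient is Hausdorff; and (ii) for all f, g ∈ G, (f, g) ∈ R if and only if θ(f) = θ(g) for every Hausdorff topological space Y and every continuous map θ : G → Y satisfying θ(h x h⁻¹) = θ(x) for all x, h ∈ G. -/

import Mathlib

/-- An equivalence relation (setoid) on a topological group which contains the conjugacy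
relation and whose quotient space is Hausdorff. -/
def ConjClosedHausdorff (G : Type) [Group G] [TopologicalSpace G] (s : Setoid G) : Prop :=
  (∀ x h : G, s.r x (h * x * h⁻¹)) ∧ T2Space (Quotient s)

/-- The graph of the weak conjugacy relation: the intersection of the graphs of all
Hausdorff equivalence relations containing the conjugacy relation. -/
def weakConjGraph (G : Type) [Group G] [TopologicalSpace G] : Set (G × G) :=
  {p : G × G | ∀ s : Setoid G, ConjClosedHausdorff G s → s.r p.1 p.2}

/-- Universal property of the weak conjugacy relation. -/
theorem stmt12 (G : Type) [Group G] [TopologicalSpace G] [IsTopologicalGroup G] :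
    (∃ s₀ : Setoid G, (∀ a b : G, s₀.r a b ↔ (a, b) ∈ weakConjGraph G) ∧
      ConjClosedHausdorff G s₀) ∧
    (∀ f g : G, (f, g) ∈ weakConjGraph G ↔
      ∀ (Y : Type) [TopologicalSpace Y] [T2Space Y] (θ : G → Y),
        Continuous θ → (∀ x h : G, θ (h * x * h⁻¹) = θ x) → θ f = θ g) := by
  classical
  have hequiv : Equivalence (fun a b : G => (a, b) ∈ weakConjGraph G) := by
    constructor
    · intro a s hs; exact s.iseqv.refl a
    · intro a b h s hs; exact s.iseqv.symm (h s hs)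
    · intro a b c h1 h2 s hs; exact s.iseqv.trans (h1 s hs) (h2 s hs)
  refine ⟨⟨⟨fun a b => (a, b) ∈ weakConjGraph G, hequiv⟩, fun a b => Iff.rfl, ?_, ?_⟩, ?_⟩
  · intro x h s hs
    exact hs.1 x h
  · -- T2 of the quotient by the intersection relation
    constructor
    intro a b hab
    induction a using Quotient.ind with | _ f => ?_
    induction b using Quotient.ind with | _ g => ?_
    have hfg : ¬ (f, g) ∈ weakConjGraph G := fun h => hab (Quotient.sound h)
    rw [weakConjGraph, Set.mem_setOf_eq] at hfg
    push_neg at hfg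
    obtain ⟨s, hs, hsr⟩ := hfg
    haveI := hs.2
    let φ : Quotient (⟨fun a b => (a, b) ∈ weakConjGraph G, hequiv⟩ : Setoid G) → Quotient s :=
      Quotient.lift (Quotient.mk s) (fun a b h => Quotient.sound (h s hs))
    have hφ : Continuous φ := Continuous.quotient_lift continuous_quotient_mk' _
    have hne : φ ⟦f⟧ ≠ φ ⟦g⟧ := fun h => hsr (Quotient.exact h)
    exact separated_by_continuous hφ hne
  · intro f g
    constructor
    · intro h Y _ _ θ hθc hθi
      have hk : ConjClosedHausdorff G (Setoid.ker θ) := by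
        refine ⟨fun x h => (hθi x h).symm, ?_⟩
        have hinj : Function.Injective
            (Quotient.lift θ (fun a b (h : θ a = θ b) => h) :
              Quotient (Setoid.ker θ) → Y) := by
          intro a b
          induction a using Quotient.ind with | _ a => ?_
          induction b using Quotient.ind with | _ b => ?_
          intro h
          exact Quotient.sound h
        exact T2Space.of_injective_continuous hinj
          (Continuous.quotient_lift hθc _)
      exact h (Setoid.ker θ) hk
    · intro h s hs
      haveI := hs.2
      have := h (Quotient s) (Quotient.mk s) continuous_quotient_mk'
        (fun x hh => (Quotient.sound (hs.1 x hh)).symm)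
      exact Quotient.exact this
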